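/- The elliptic curve E_a(Q) has three rational points of order 2 if and only if a^2 - 6a + 1 is the square of a rational number, and the rational solutions of a^2 - 6a + 1 = b^2 with a ≠ 0 are parametrized by a = 2(k+3)/(1-k^2) for rational k ≠ ±1 (via the line b = 1 + ka through (0,1)). -/

import Mathlib

/-- The Weierstrass curve `E_a : v² = u³ + (a⁴-4a³-2a²-4a+1)u² + 16a⁴u` over `ℚ`. -/
def Ecurve (a : ℚ) : WeierstrassCurve.Affine ℚ :=
  { a₁ := 0, a₂ := a ^ 4 - 4 * a ^ 3 - 2 * a ^ 2 - 4 * a + 1, a₃ := 0,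
    a₄ := 16 * a ^ 4, a₆ := 0 }

lemma no_root (a : ℚ) : a ^ 2 - 6 * a + 1 ≠ 0 := by
  intro h
  apply irrational_sqrt_two
  refine ⟨|(a - 3) / 2|, ?_⟩
  have h2 : (((a - 3) / 2 : ℚ) : ℝ) ^ 2 = 2 := by
    have h' : (a : ℝ) ^ 2 - 6 * a + 1 = 0 := by exact_mod_cast h
    push_cast
    linear_combination h' / 4
  rw [Rat.cast_abs, ← Real.sqrt_sq_eq_abs, h2]

lemma nonsingular_x0 (a x : ℚ) : (Ecurve a).Nonsingular x 0 ↔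
    (x ^ 3 + (a ^ 4 - 4 * a ^ 3 - 2 * a ^ 2 - 4 * a + 1) * x ^ 2 + 16 * a ^ 4 * x = 0 ∧
     3 * x ^ 2 + 2 * (a ^ 4 - 4 * a ^ 3 - 2 * a ^ 2 - 4 * a + 1) * x + 16 * a ^ 4 ≠ 0) := by
  rw [WeierstrassCurve.Affine.nonsingular_iff, WeierstrassCurve.Affine.equation_iff]
  simp only [Ecurve]
  constructor
  · rintro ⟨h1, h2 | h2⟩
    · exact ⟨by linear_combination -h1, by intro h; exact h2 (by linear_combination -h)⟩
    · simp at h2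
  · rintro ⟨h1, h2⟩
    exact ⟨by linear_combination -h1, Or.inl (by intro h; exact h2 (by linear_combination -h))⟩

lemma order_two_iff (a : ℚ) (P : (Ecurve a).Point) :
    addOrderOf P = 2 ↔ ∃ x : ℚ, ∃ h : (Ecurve a).Nonsingular x 0, P = .some _ _ h := by
  haveI : Fact (Nat.Prime 2) := ⟨Nat.prime_two⟩
  constructor
  · intro hP
    cases P with
    | zero =>
        rw [show (WeierstrassCurve.Affine.Point.zero : (Ecurve a).Point) = 0 from rfl,
          addOrderOf_zero] at hP
        norm_num at hP
    | @some x y h =>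
        have h2 : (2 : ℕ) • (WeierstrassCurve.Affine.Point.some _ _ h) = 0 := by
          rw [← hP]; exact addOrderOf_nsmul_eq_zero _
        rw [two_nsmul] at h2
        have hy : y = 0 := by
          by_contra hy
          have hne : y ≠ (Ecurve a).negY x y := by
            simp only [WeierstrassCurve.Affine.negY, Ecurve]
            intro hc
            exact hy (by linarith)
          rw [WeierstrassCurve.Affine.Point.add_self_of_Y_ne hne] at h2
          exact WeierstrassCurve.Affine.Point.some_ne_zero _ h2
        subst hy
        exact ⟨x, h, rfl⟩
  · rintro ⟨x, h, rfl⟩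
    refine addOrderOf_eq_prime ?_ (WeierstrassCurve.Affine.Point.some_ne_zero h)
    rw [two_nsmul]
    exact WeierstrassCurve.Affine.Point.add_self_of_Y_eq
      (by simp [WeierstrassCurve.Affine.negY, Ecurve])

lemma some_ne {a : ℚ} {x₁ y₁ x₂ y₂ : ℚ} (h₁ : (Ecurve a).Nonsingular x₁ y₁)
    (h₂ : (Ecurve a).Nonsingular x₂ y₂) (hx : x₁ ≠ x₂) :
    (WeierstrassCurve.Affine.Point.some _ _ h₁ : (Ecurve a).Point) ≠ .some _ _ h₂ := by
  intro h
  injection h with h' _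
  exact hx h'

lemma key (a r s : ℚ) (ha1 : a - 1 ≠ 0) (ha2 : a + 1 ≠ 0) (hrs : r ≠ s) (hr0 : r ≠ 0)
    (hs0 : s ≠ 0)
    (hr : r ^ 3 + (a ^ 4 - 4 * a ^ 3 - 2 * a ^ 2 - 4 * a + 1) * r ^ 2 + 16 * a ^ 4 * r = 0)
    (hs : s ^ 3 + (a ^ 4 - 4 * a ^ 3 - 2 * a ^ 2 - 4 * a + 1) * s ^ 2 + 16 * a ^ 4 * s = 0) :
    ∃ b : ℚ, a ^ 2 - 6 * a + 1 = b ^ 2 := by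
  set A := a ^ 4 - 4 * a ^ 3 - 2 * a ^ 2 - 4 * a + 1 with hA
  have hqr : r ^ 2 + A * r + 16 * a ^ 4 = 0 := by
    have h : r * (r ^ 2 + A * r + 16 * a ^ 4) = 0 := by linear_combination hr
    rcases mul_eq_zero.mp h with h' | h'
    · exact absurd h' hr0
    · exact h'
  have hqs : s ^ 2 + A * s + 16 * a ^ 4 = 0 := by
    have h : s * (s ^ 2 + A * s + 16 * a ^ 4) = 0 := by linear_combination hs
    rcases mul_eq_zero.mp h with h' | h'
    · exact absurd h' hs0
    · exact h'
  have hsum : r + s = -A := by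
    have h : (r - s) * (r + s + A) = 0 := by linear_combination hqr - hqs
    rcases mul_eq_zero.mp h with h' | h'
    · exact absurd (sub_eq_zero.mp h') hrs
    · linarith
  have hprod : r * s = 16 * a ^ 4 := by linear_combination r * hsum - hqr
  have hd : (r - s) ^ 2 = A ^ 2 - 64 * a ^ 4 := by
    linear_combination (r + s - A) * hsum - 4 * hprod
  refine ⟨(r - s) / ((a + 1) * (a - 1) ^ 2), ?_⟩
  rw [div_pow, eq_div_iff (pow_ne_zero _ (mul_ne_zero ha2 (pow_ne_zero _ ha1)))]
  linear_combination -hd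

lemma backward (a b : ℚ) (ha0 : a ≠ 0) (ha1 : a - 1 ≠ 0) (ha2 : a + 1 ≠ 0)
    (hb : a ^ 2 - 6 * a + 1 = b ^ 2) :
    ∃ S : Finset (Ecurve a).Point, S.card = 3 ∧ ∀ P ∈ S, addOrderOf P = 2 := by
  classical
  have hb0 : b ≠ 0 := by
    intro h
    exact no_root a (by rw [h] at hb; simpa using hb)
  set A := a ^ 4 - 4 * a ^ 3 - 2 * a ^ 2 - 4 * a + 1 with hA
  set R : ℚ := (-A + b * (a + 1) * (a - 1) ^ 2) / 2 with hR
  set S : ℚ := (-A - b * (a + 1) * (a - 1) ^ 2) / 2 with hS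
  have hqr : R ^ 2 + A * R + 16 * a ^ 4 = 0 := by
    rw [hR, hA]
    linear_combination (-(a + 1) ^ 2 * (a - 1) ^ 4 / 4) * hb
  have hqs : S ^ 2 + A * S + 16 * a ^ 4 = 0 := by
    rw [hS, hA]
    linear_combination (-(a + 1) ^ 2 * (a - 1) ^ 4 / 4) * hb
  have ha4 : (16 : ℚ) * a ^ 4 ≠ 0 := by positivity
  have hr0 : R ≠ 0 := by
    intro h
    rw [h] at hqr
    simp only [ne_eq, zero_pow, mul_zero, zero_add, add_zero] at hqr
    norm_num at hqr
    exact ha4 (by rw [hqr]; ring)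
  have hs0 : S ≠ 0 := by
    intro h
    rw [h] at hqs
    simp only [ne_eq, zero_pow, mul_zero, zero_add, add_zero] at hqs
    norm_num at hqs
    exact ha4 (by rw [hqs]; ring)
  have hrs : R ≠ S := by
    intro h
    have h' : b * ((a + 1) * (a - 1) ^ 2) = 0 := by
      rw [hR, hS] at h
      linear_combination h
    rcases mul_eq_zero.mp h' with h'' | h''
    · exact hb0 h''
    · rcases mul_eq_zero.mp h'' with h3 | h3
      · exact ha2 h3
      · exact ha1 (pow_eq_zero_iff (by norm_num) |>.mp h3)
  have hdr : 3 * R ^ 2 + 2 * A * R + 16 * a ^ 4 = R * (b * (a + 1) * (a - 1) ^ 2) := by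
    rw [hR]
    linear_combination hqr
  have hds : 3 * S ^ 2 + 2 * A * S + 16 * a ^ 4 = S * (-(b * (a + 1) * (a - 1) ^ 2)) := by
    rw [hS]
    linear_combination hqs
  have hbD : b * (a + 1) * (a - 1) ^ 2 ≠ 0 :=
    mul_ne_zero (mul_ne_zero hb0 ha2) (pow_ne_zero _ ha1)
  have h0 : (Ecurve a).Nonsingular 0 0 := by
    rw [nonsingular_x0]
    refine ⟨by ring, ?_⟩
    intro h
    exact ha4 (by linear_combination h)
  have hRn : (Ecurve a).Nonsingular R 0 := by
    rw [nonsingular_x0]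
    refine ⟨by rw [← hA]; linear_combination R * hqr, ?_⟩
    rw [← hA, hdr]
    exact mul_ne_zero hr0 hbD
  have hSn : (Ecurve a).Nonsingular S 0 := by
    rw [nonsingular_x0]
    refine ⟨by rw [← hA]; linear_combination S * hqs, ?_⟩
    rw [← hA, hds]
    exact mul_ne_zero hs0 (neg_ne_zero.mpr hbD)
  refine ⟨({WeierstrassCurve.Affine.Point.some _ _ h0, .some _ _ hRn, .some _ _ hSn} : Finset (Ecurve a).Point), ?_, ?_⟩
  · rw [Finset.card_eq_three]
    exact ⟨_, _, _, some_ne h0 hRn (Ne.symm hr0), some_ne h0 hSn (Ne.symm hs0),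
      some_ne hRn hSn hrs, rfl⟩
  · intro P hP
    simp only [Finset.mem_insert, Finset.mem_singleton] at hP
    rcases hP with rfl | rfl | rfl
    · exact (order_two_iff a _).mpr ⟨0, h0, rfl⟩
    · exact (order_two_iff a _).mpr ⟨R, hRn, rfl⟩
    · exact (order_two_iff a _).mpr ⟨S, hSn, rfl⟩

lemma param (a b : ℚ) (ha : a ≠ 0) (hb : a ^ 2 - 6 * a + 1 = b ^ 2) :
    ∃ k : ℚ, k ≠ 1 ∧ k ≠ -1 ∧ a = 2 * (k + 3) / (1 - k ^ 2) := by
  have hk1 : (b - 1) / a ≠ 1 := by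
    intro h
    rw [div_eq_one_iff_eq ha] at h
    rw [show b = a + 1 by linarith] at hb
    exact ha (by linear_combination hb / (-8))
  have hk2 : (b - 1) / a ≠ -1 := by
    intro h
    rw [div_eq_iff ha] at h
    rw [show b = 1 - a by linarith] at hb
    exact ha (by linear_combination hb / (-4))
  refine ⟨(b - 1) / a, hk1, hk2, ?_⟩
  have hne : 1 - ((b - 1) / a) ^ 2 ≠ 0 := by
    intro h
    have h' : (1 - (b - 1) / a) * (1 + (b - 1) / a) = 0 := by linear_combination h
    rcases mul_eq_zero.mp h' with h'' | h''
    · exact hk1 (by linarith)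
    · exact hk2 (by linarith)
  rw [eq_div_iff hne]
  field_simp
  linear_combination hb

theorem stmt_8 :
    (∀ a : ℚ, a * (a - 1) * (a + 1) ≠ 0 →
      ((∃ S : Finset (Ecurve a).Point, S.card = 3 ∧ ∀ P ∈ S, addOrderOf P = 2) ↔
        ∃ b : ℚ, a ^ 2 - 6 * a + 1 = b ^ 2)) ∧
    (∀ a b : ℚ, a ≠ 0 → a ^ 2 - 6 * a + 1 = b ^ 2 →
      ∃ k : ℚ, k ≠ 1 ∧ k ≠ -1 ∧ a = 2 * (k + 3) / (1 - k ^ 2)) ∧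
    (∀ k : ℚ, k ≠ 1 → k ≠ -1 →
      ∃ b : ℚ, (2 * (k + 3) / (1 - k ^ 2)) ^ 2 - 6 * (2 * (k + 3) / (1 - k ^ 2)) + 1 = b ^ 2) := by
  refine ⟨?_, ?_, ?_⟩
  · intro a ha
    have ha0 : a ≠ 0 := fun h => ha (by rw [h]; ring)
    have ha1 : a - 1 ≠ 0 := fun h => ha (by rw [sub_eq_zero.mp h]; ring)
    have ha2 : a + 1 ≠ 0 := fun h => ha (by rw [show a = -1 by linarith]; ring)
    constructor
    · rintro ⟨S, hcard, hord⟩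
      classical
      rw [Finset.card_eq_three] at hcard
      obtain ⟨P₁, P₂, P₃, h12, h13, h23, rfl⟩ := hcard
      obtain ⟨x₁, hn1, rfl⟩ := (order_two_iff a P₁).mp (hord P₁ (by simp))
      obtain ⟨x₂, hn2, rfl⟩ := (order_two_iff a P₂).mp (hord P₂ (by simp))
      obtain ⟨x₃, hn3, rfl⟩ := (order_two_iff a P₃).mp (hord P₃ (by simp))
      have hx12 : x₁ ≠ x₂ := by
        intro h; subst h; exact h12 rfl
      have hx13 : x₁ ≠ x₃ := by
        intro h; subst h; exact h13 rfl
      have hx23 : x₂ ≠ x₃ := by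
        intro h; subst h; exact h23 rfl
      have he1 := ((nonsingular_x0 a x₁).mp hn1).1
      have he2 := ((nonsingular_x0 a x₂).mp hn2).1
      have he3 := ((nonsingular_x0 a x₃).mp hn3).1
      by_cases h1 : x₁ = 0
      · exact key a x₂ x₃ ha1 ha2 hx23 (h1 ▸ hx12.symm) (h1 ▸ hx13.symm) he2 he3
      · by_cases h2 : x₂ = 0
        · exact key a x₁ x₃ ha1 ha2 hx13 h1 (h2 ▸ hx23.symm) he1 he3
        · exact key a x₁ x₂ ha1 ha2 hx12 h1 h2 he1 he2
    · rintro ⟨b, hb⟩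
      exact backward a b ha0 ha1 ha2 hb
  · exact fun a b ha hb => param a b ha hb
  · intro k hk1 hk2
    have hne : 1 - k ^ 2 ≠ 0 := by
      intro h
      have h' : (1 - k) * (1 + k) = 0 := by linear_combination h
      rcases mul_eq_zero.mp h' with h'' | h''
      · exact hk1 (by linarith)
      · exact hk2 (by linarith)
    refine ⟨1 + k * (2 * (k + 3) / (1 - k ^ 2)), ?_⟩
    field_simp
    ring
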